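/- (Asynchronous Approximate Value Iteration.) Let ε ≥ 0 and M ∈ ℕ, let (σ_k) be a sequence of states, and let (Ṽ_k) be the asynchronous noisy value-iteration sequence from an arbitrary initial vector Ṽ_0: Ṽ_{k+1} = F̃_k Ṽ_k where (F̃_k W)(σ_k) = (T W)(σ_k) + w̃_k with |w̃_k| ≤ ε and (F̃_k W)(s) = W(s) for s ≠ σ_k. Let (k_n) be a strictly increasing sequence of indices with k_0 = 0 such that, for every n, every state of S appears among σ_{k_n}, …, σ_{k_{n+1}−1}, and k_{n+1} − k_n ≤ M. Then limsup_{n→∞} ‖V* − Ṽ_{k_n}‖∞ ≤ Mε/(1−γ), where V* is the unique fixed point of T. -/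

import Mathlib

open Finset Filter

noncomputable def supNorm {S : Type*} [Fintype S] [Nonempty S] (V : S → ℝ) : ℝ :=
  Finset.univ.sup' Finset.univ_nonempty fun s => |V s|

noncomputable def bellmanT {S A : Type*} [Fintype S] [Fintype A] [Nonempty A]
    (P R : S → A → S → ℝ) (γ : ℝ) (V : S → ℝ) : S → ℝ :=
  fun s => Finset.univ.sup' Finset.univ_nonempty
    fun a => ∑ s', P s a s' * (R s a s' + γ * V s')


noncomputable def asyncF {S A : Type*} [Fintype S] [Nonempty S] [DecidableEq S]
    [Fintype A] [Nonempty A]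
    (P R : S → A → S → ℝ) (γ : ℝ) (σ : S) (V : S → ℝ) : S → ℝ :=
  fun s => if s = σ then bellmanT P R γ V s else V s

lemma abs_le_supNorm {S : Type*} [Fintype S] [Nonempty S] (V : S → ℝ) (s : S) :
    |V s| ≤ supNorm V :=
  Finset.le_sup' (fun s => |V s|) (Finset.mem_univ s)

lemma supNorm_nonneg {S : Type*} [Fintype S] [Nonempty S] (V : S → ℝ) :
    0 ≤ supNorm V := by
  obtain ⟨s⟩ := (inferInstance : Nonempty S)
  exact le_trans (abs_nonneg _) (abs_le_supNorm V s)

lemma supNorm_le {S : Type*} [Fintype S] [Nonempty S] (V : S → ℝ) (c : ℝ)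
    (h : ∀ s, |V s| ≤ c) : supNorm V ≤ c :=
  Finset.sup'_le _ _ fun s _ => h s

lemma supNorm_sub_comm {S : Type*} [Fintype S] [Nonempty S] (V W : S → ℝ) :
    supNorm (V - W) = supNorm (W - V) := by
  simp only [supNorm, Pi.sub_apply, abs_sub_comm]

lemma bellman_contract {S A : Type*} [Fintype S] [Nonempty S] [Fintype A] [Nonempty A]
    (P R : S → A → S → ℝ) (hP0 : ∀ s a s', 0 ≤ P s a s') (hP1 : ∀ s a, ∑ s', P s a s' = 1)
    (γ : ℝ) (hγ0 : 0 ≤ γ) (V W : S → ℝ) (s : S) :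
    |bellmanT P R γ V s - bellmanT P R γ W s| ≤ γ * supNorm (V - W) := by
  have key : ∀ (X Y : S → ℝ) (a : A),
      (∑ s', P s a s' * (R s a s' + γ * X s')) ≤
        (∑ s', P s a s' * (R s a s' + γ * Y s')) + γ * supNorm (X - Y) := by
    intro X Y a
    have : (∑ s', P s a s' * (R s a s' + γ * X s')) -
        (∑ s', P s a s' * (R s a s' + γ * Y s')) =
        ∑ s', P s a s' * (γ * (X s' - Y s')) := by
      rw [← Finset.sum_sub_distrib]
      congr 1; ext s'; ring
    have hb : (∑ s', P s a s' * (γ * (X s' - Y s'))) ≤ γ * supNorm (X - Y) := by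
      calc (∑ s', P s a s' * (γ * (X s' - Y s')))
          ≤ ∑ s', P s a s' * (γ * supNorm (X - Y)) := by
            apply Finset.sum_le_sum
            intro s' _
            apply mul_le_mul_of_nonneg_left _ (hP0 s a s')
            apply mul_le_mul_of_nonneg_left _ hγ0
            exact le_trans (le_abs_self _) (abs_le_supNorm (X - Y) s')
        _ = γ * supNorm (X - Y) := by
            rw [← Finset.sum_mul, hP1 s a, one_mul]
    linarith [this ▸ hb]
  rw [abs_sub_le_iff]
  constructor
  · rw [sub_le_iff_le_add, bellmanT]
    apply Finset.sup'_le
    intro a _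
    exact le_trans (key V W a) (by
      have := Finset.le_sup' (f := fun a => ∑ s', P s a s' * (R s a s' + γ * W s'))
        (Finset.mem_univ a)
      simp only [bellmanT]
      linarith)
  · rw [sub_le_iff_le_add, bellmanT]
    apply Finset.sup'_le
    intro a _
    exact le_trans (key W V a) (by
      have := Finset.le_sup' (f := fun a => ∑ s', P s a s' * (R s a s' + γ * V s'))
        (Finset.mem_univ a)
      rw [supNorm_sub_comm W V]
      simp only [bellmanT]
      linarith)

theorem async_approximate_value_iteration (n : ℕ) [NeZero n] (A : Type*) [Fintype A] [Nonempty A]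
    (P R : Fin n → A → Fin n → ℝ)
    (hP0 : ∀ s a s', 0 ≤ P s a s') (hP1 : ∀ s a, ∑ s', P s a s' = 1)
    (γ : ℝ) (hγ0 : 0 ≤ γ) (hγ1 : γ < 1)
    (ε : ℝ) (hε : 0 ≤ ε) (M : ℕ) (σ : ℕ → Fin n)
    (Vt : ℕ → Fin n → ℝ) (wt : ℕ → ℝ)
    (hwt : ∀ j, |wt j| ≤ ε)
    (hVt1 : ∀ j, Vt (j + 1) (σ j) = bellmanT P R γ (Vt j) (σ j) + wt j)
    (hVt2 : ∀ j s, s ≠ σ j → Vt (j + 1) s = Vt j s)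
    (kseq : ℕ → ℕ) (hmono : StrictMono kseq) (h0 : kseq 0 = 0)
    (hcover : ∀ m (s : Fin n), ∃ j, kseq m ≤ j ∧ j < kseq (m + 1) ∧ σ j = s)
    (hM : ∀ m, kseq (m + 1) - kseq m ≤ M)
    (Vstar : Fin n → ℝ) (hfix : bellmanT P R γ Vstar = Vstar) :
    Filter.limsup (fun m => supNorm (Vstar - Vt (kseq m))) Filter.atTop ≤
      (M : ℝ) * ε / (1 - γ) := by
  set d : ℕ → ℝ := fun j => supNorm (Vstar - Vt j) with hd
  have hγ1' : 0 < 1 - γ := by linarith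
  -- per-update bound
  have hupd : ∀ j, |Vstar (σ j) - Vt (j + 1) (σ j)| ≤ γ * d j + ε := by
    intro j
    rw [hVt1 j]
    have h1 : |bellmanT P R γ Vstar (σ j) - bellmanT P R γ (Vt j) (σ j)| ≤ γ * d j :=
      bellman_contract P R hP0 hP1 γ hγ0 Vstar (Vt j) (σ j)
    have : Vstar (σ j) - (bellmanT P R γ (Vt j) (σ j) + wt j) =
        (bellmanT P R γ Vstar (σ j) - bellmanT P R γ (Vt j) (σ j)) + (- wt j) := by
      rw [hfix]; ring
    rw [this]
    calc |_ + (- wt j)| ≤ |bellmanT P R γ Vstar (σ j) - bellmanT P R γ (Vt j) (σ j)| + |(- wt j)| :=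
          abs_add_le _ _
      _ ≤ γ * d j + ε := by rw [abs_neg]; exact add_le_add h1 (hwt j)
  -- d grows by at most ε per step
  have hstep : ∀ j, d (j + 1) ≤ d j + ε := by
    intro j
    apply supNorm_le
    intro s
    by_cases hs : s = σ j
    · subst hs
      have := hupd j
      have hdj : 0 ≤ d j := supNorm_nonneg _
      simp only [Pi.sub_apply]
      nlinarith
    · simp only [Pi.sub_apply]
      rw [hVt2 j s hs]
      exact le_trans (abs_le_supNorm (Vstar - Vt j) s) (by linarith [hε])
  have hgrow : ∀ i j, i ≤ j → d j ≤ d i + (j - i : ℕ) * ε := by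
    intro i j hij
    induction j with
    | zero => simp_all
    | succ j ih =>
      rcases Nat.lt_or_ge i (j + 1) with h | h
      · have hij' : i ≤ j := Nat.lt_succ_iff.mp h
        have := ih hij'
        have h2 := hstep j
        have hc : ((j + 1 - i : ℕ) : ℝ) = ((j - i : ℕ) : ℝ) + 1 := by
          have : j + 1 - i = (j - i) + 1 := by omega
          rw [this]; push_cast; ring
        rw [hc]; nlinarith
      · have : i = j + 1 := by omega
        subst this; simp
  -- sweep bound : d (kseq (m+1)) ≤ γ * d (kseq m) + M * ε
  have hsweep : ∀ m, d (kseq (m + 1)) ≤ γ * d (kseq m) + M * ε := by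
    intro m
    have hM1 : 1 ≤ M := by
      obtain ⟨j, hj1, hj2, _⟩ := hcover m (σ (kseq m))
      have := hM m
      omega
    apply supNorm_le
    intro s
    -- take the last update time of s in [kseq m, kseq (m+1))
    classical
    have hne : ((Finset.Ico (kseq m) (kseq (m + 1))).filter (fun j => σ j = s)).Nonempty := by
      obtain ⟨j, hj1, hj2, hj3⟩ := hcover m s
      exact ⟨j, by simp [Finset.mem_filter, Finset.mem_Ico, hj1, hj2, hj3]⟩
    set j := ((Finset.Ico (kseq m) (kseq (m + 1))).filter (fun j => σ j = s)).max' hne with hjdef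
    have hjmem := Finset.max'_mem _ hne
    rw [← hjdef] at hjmem
    simp only [Finset.mem_filter, Finset.mem_Ico] at hjmem
    obtain ⟨⟨hj1, hj2⟩, hj3⟩ := hjmem
    have hlast : ∀ l, j < l → l < kseq (m + 1) → σ l ≠ s := by
      intro l hl1 hl2 hls
      have hlmem : l ∈ (Finset.Ico (kseq m) (kseq (m + 1))).filter (fun j => σ j = s) := by
        simp [Finset.mem_filter, Finset.mem_Ico, hls]
        omega
      have := Finset.le_max' _ l hlmem
      rw [← hjdef] at this
      omega
    -- Vt (kseq (m+1)) s = Vt (j+1) s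
    have hstable : ∀ l, j + 1 ≤ l → l ≤ kseq (m + 1) → Vt l s = Vt (j + 1) s := by
      intro l hl1 hl2
      induction l with
      | zero => omega
      | succ l ih =>
        rcases Nat.lt_or_ge (j + 1) (l + 1) with h | h
        · have h1 : j + 1 ≤ l := by omega
          have h2 : l ≤ kseq (m + 1) := by omega
          rw [hVt2 l s (fun hc => hlast l (by omega) (by omega) hc.symm)]
          exact ih h1 h2
        · have : l + 1 = j + 1 := by omega
          rw [this]
    have heq : Vt (kseq (m + 1)) s = Vt (j + 1) s := hstable _ (by omega) (le_refl _)
    simp only [Pi.sub_apply]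
    rw [heq, ← hj3]
    have h1 := hupd j
    rw [hj3] at h1
    have h2 : d j ≤ d (kseq m) + ((j - kseq m : ℕ) : ℝ) * ε := hgrow (kseq m) j hj1
    have h3 : (j - kseq m : ℕ) ≤ M - 1 := by
      have := hM m
      omega
    have h4 : ((j - kseq m : ℕ) : ℝ) ≤ (M : ℝ) - 1 := by
      have : ((j - kseq m : ℕ) : ℝ) ≤ ((M - 1 : ℕ) : ℝ) := by exact_mod_cast h3
      rw [Nat.cast_sub hM1] at this
      simpa using this
    have hdk : 0 ≤ d (kseq m) := supNorm_nonneg _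
    rw [hj3]
    have hc0 : (0:ℝ) ≤ ((j - kseq m : ℕ) : ℝ) := Nat.cast_nonneg _
    have e1 : γ * d j ≤ γ * (d (kseq m) + ((j - kseq m : ℕ) : ℝ) * ε) :=
      mul_le_mul_of_nonneg_left h2 hγ0
    have e2 : γ * (((j - kseq m : ℕ) : ℝ) * ε) ≤ ((j - kseq m : ℕ) : ℝ) * ε := by
      nlinarith [mul_nonneg hc0 hε]
    have e3 : ((j - kseq m : ℕ) : ℝ) * ε ≤ ((M : ℝ) - 1) * ε :=
      mul_le_mul_of_nonneg_right h4 hε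
    linarith [h1]
  -- geometric decay : d (kseq m) ≤ γ^m * d 0 + M ε / (1 - γ)
  set C : ℝ := (M : ℝ) * ε / (1 - γ) with hC
  have hC0 : 0 ≤ C := by
    apply div_nonneg _ (le_of_lt hγ1')
    positivity
  have hgeo : ∀ m, d (kseq m) ≤ γ ^ m * d (kseq 0) + C := by
    intro m
    induction m with
    | zero => simp [hC0]
    | succ m ih =>
      have h1 := hsweep m
      have hkey : γ * C + (M : ℝ) * ε = C := by
        rw [hC, mul_div_assoc', div_add' _ _ _ hγ1'.ne']; congr 1
        ring
      calc d (kseq (m + 1)) ≤ γ * d (kseq m) + M * ε := h1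
        _ ≤ γ * (γ ^ m * d (kseq 0) + C) + M * ε := by
            have := mul_le_mul_of_nonneg_left ih hγ0
            linarith
        _ = γ ^ (m + 1) * d (kseq 0) + (γ * C + M * ε) := by ring
        _ = γ ^ (m + 1) * d (kseq 0) + C := by rw [hkey]
  -- conclude via limsup
  have hd0 : 0 ≤ d (kseq 0) := supNorm_nonneg _
  have hcb : Filter.IsCoboundedUnder (· ≤ ·) Filter.atTop (fun m => supNorm (Vstar - Vt (kseq m))) := by
    exact Filter.isCoboundedUnder_le_of_le _ (x := 0) fun m => supNorm_nonneg _
  apply le_of_forall_pos_le_add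
  intro δ hδ
  apply Filter.limsup_le_of_le hcb
  have htend : Filter.Tendsto (fun m => γ ^ m * d (kseq 0)) Filter.atTop (nhds 0) := by
    rcases eq_or_lt_of_le hd0 with h | h
    · simpa [← h] using tendsto_const_nhds
    · have := tendsto_pow_atTop_nhds_zero_of_lt_one hγ0 hγ1
      simpa using this.mul_const (d (kseq 0))
  have : ∀ᶠ m in Filter.atTop, γ ^ m * d (kseq 0) < δ := by
    have := htend.eventually (eventually_lt_nhds hδ)
    simpa using this
  filter_upwards [this] with m hm
  have := hgeo m
  calc supNorm (Vstar - Vt (kseq m)) ≤ γ ^ m * d (kseq 0) + C := this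
    _ ≤ C + δ := by linarith
    _ = (M : ℝ) * ε / (1 - γ) + δ := by rw [hC]
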